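/- Let p < 0 and let 0 ≤ x₁ < x₂ < … < x_{2N} ≤ 1 be distinct points. Then for every perfect matching μ of {1,…,2N} (a partition into N unordered pairs), Σ_{i=1}^{N} (x_{i+N} − x_i)^p ≤ Σ_{(i,j)∈μ} (x_j − x_i)^p (sums over pairs written with j > i); that is, the maximally crossing matching pairing xᵢ with x_{i+N} for i = 1,…,N is optimal for the matching problem on the interval with cost z^p, p < 0. -/

import Mathlib

open Set Equiv Finset



/-! ### Analytic lemmas -/

lemma convexOn_rpow_neg {p : ℝ} (hp : p < 0) :
    ConvexOn ℝ (Set.Ioi (0:ℝ)) fun x : ℝ => x ^ p := by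
  have hint : interior (Set.Ioi (0:ℝ)) = Set.Ioi 0 := interior_Ioi
  apply convexOn_of_hasDerivWithinAt2_nonneg (f' := fun x => p * x ^ (p-1))
    (f'' := fun x => p * ((p-1) * x ^ (p-2))) (convex_Ioi 0)
  · exact fun y hy => (Real.continuousAt_rpow_const y p (Or.inl (ne_of_gt hy))).continuousWithinAt
  · intro y hy
    rw [hint] at hy ⊢
    exact (Real.hasDerivAt_rpow_const (Or.inl (ne_of_gt hy))).hasDerivWithinAt
  · intro y hy
    rw [hint] at hy ⊢
    have h1 : HasDerivAt (fun x : ℝ => x ^ (p-1)) ((p-1) * y ^ (p-1-1)) y :=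
      Real.hasDerivAt_rpow_const (Or.inl (ne_of_gt hy))
    have h2 := h1.const_mul p
    convert h2.hasDerivWithinAt using 1
    · rfl
    · rfl
    · rw [show p - 1 - 1 = p - 2 by ring]
  · intro y hy
    rw [hint] at hy
    have h1 : (0:ℝ) < y ^ (p-2) := Real.rpow_pos_of_pos hy _
    have h2 : 0 < p * (p - 1) := mul_pos_of_neg_of_neg hp (by linarith)
    calc (0:ℝ) ≤ p * (p-1) * y ^ (p-2) := le_of_lt (mul_pos h2 h1)
      _ = p * ((p-1) * y ^ (p-2)) := by ring

lemma rpow_nested_aux {p : ℝ} (hp : p < 0) {α s t : ℝ} (hα : 0 < α) (hs : 0 ≤ s) (ht : 0 ≤ t) :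
    (α+s) ^ p + (α+t) ^ p ≤ α ^ p + (α+s+t) ^ p := by
  rcases eq_or_lt_of_le (by linarith : (0:ℝ) ≤ s + t) with h0 | h0
  · have hs0 : s = 0 := by linarith
    have ht0 : t = 0 := by linarith
    simp [hs0, ht0]
  have hc := convexOn_rpow_neg hp
  have m1 : α ∈ Set.Ioi (0:ℝ) := hα
  have m2 : α + s + t ∈ Set.Ioi (0:ℝ) := by simp only [Set.mem_Ioi]; linarith
  have h1 := hc.2 m1 m2 (div_nonneg ht h0.le) (div_nonneg hs h0.le)
    (by field_simp; try ring; try linarith)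
  have h2 := hc.2 m1 m2 (div_nonneg hs h0.le) (div_nonneg ht h0.le)
    (by field_simp)
  simp only [smul_eq_mul] at h1 h2
  have e1 : t / (s+t) * α + s / (s+t) * (α+s+t) = α + s := by
    field_simp; try ring; try linarith
  have e2 : s / (s+t) * α + t / (s+t) * (α+s+t) = α + t := by
    field_simp; try ring; try linarith
  rw [e1] at h1; rw [e2] at h2
  have hsum : t / (s + t) * α ^ p + s / (s + t) * (α + s + t) ^ p +
      (s / (s + t) * α ^ p + t / (s + t) * (α + s + t) ^ p) = α ^ p + (α+s+t) ^ p := by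
    field_simp; try ring; try linarith
  linarith [h1, h2]

lemma rpow_anti_neg {p : ℝ} (hp : p < 0) {u v : ℝ} (hu : 0 < u) (huv : u ≤ v) :
    v ^ p ≤ u ^ p :=
  Real.antitoneOn_rpow_Ioi_of_exponent_nonpos hp.le hu (lt_of_lt_of_le hu huv) huv

/-- nested exchange: pairs (A,D),(B,C) → (A,C),(B,D) -/
lemma key_nested {p : ℝ} (hp : p < 0) {A B C D : ℝ} (h1 : A < B) (h2 : B < C) (h3 : C < D) :
    (C-A) ^ p + (D-B) ^ p ≤ (D-A) ^ p + (C-B) ^ p := by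
  have h := rpow_nested_aux hp (α := C-B) (s := B-A) (t := D-C)
    (by linarith) (by linarith) (by linarith)
  rw [show C-B+(B-A) = C-A by ring, show C-B+(D-C) = D-B by ring,
    show C-A+(D-C) = D-A by ring] at h
  linarith

/-- disjoint exchange: pairs (A,B),(C,D) → (A,C),(B,D) -/
lemma key_disjoint {p : ℝ} (hp : p < 0) {A B C D : ℝ} (h1 : A < B) (h2 : B < C) (h3 : C < D) :
    (C-A) ^ p + (D-B) ^ p ≤ (B-A) ^ p + (D-C) ^ p := by
  have e1 : (C-A) ^ p ≤ (B-A) ^ p := rpow_anti_neg hp (by linarith) (by linarith)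
  have e2 : (D-B) ^ p ≤ (D-C) ^ p := rpow_anti_neg hp (by linarith) (by linarith)
  linarith

/-! ### ℕ distance and measure lemmas -/

/-- symmetric difference of naturals, omega-friendly -/
def pd (i j : ℕ) : ℕ := (i - j) + (j - i)

lemma pd_comm (i j : ℕ) : pd i j = pd j i := by simp [pd]; omega

lemma pd_of_le {i j : ℕ} (h : i ≤ j) : pd i j = j - i := by simp [pd]; omega

/-- measure strictly decreases on a nested exchange -/
lemma meas_nested {n K A B C D : ℕ} (h1 : A < B) (h2 : B < C) (h3 : C < D) (h4 : D < n) :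
    (K*(n - (C-A)) + (C-A)^2) + (K*(n-(D-B)) + (D-B)^2)
      < (K*(n-(D-A)) + (D-A)^2) + (K*(n-(C-B)) + (C-B)^2) := by
  zify [show A ≤ C by omega, show B ≤ D by omega, show A ≤ D by omega, show B ≤ C by omega,
    show C - A ≤ n by omega, show D - B ≤ n by omega, show D - A ≤ n by omega,
    show C - B ≤ n by omega]
  have hu : (0:ℤ) < (B:ℤ) - A := by omega
  have hw : (0:ℤ) < (D:ℤ) - C := by omega
  nlinarith [mul_pos hu hw]

/-- measure strictly decreases on a disjoint exchange, provided `K` is large -/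
lemma meas_disjoint {n K A B C D : ℕ} (hK : K = 4*n^2+1)
    (h1 : A < B) (h2 : B < C) (h3 : C < D) (h4 : D < n) :
    (K*(n - (C-A)) + (C-A)^2) + (K*(n-(D-B)) + (D-B)^2)
      < (K*(n-(B-A)) + (B-A)^2) + (K*(n-(D-C)) + (D-C)^2) := by
  subst hK
  zify [show A ≤ C by omega, show B ≤ D by omega, show A ≤ B by omega, show C ≤ D by omega,
    show C - A ≤ n by omega, show D - B ≤ n by omega, show B - A ≤ n by omega,
    show D - C ≤ n by omega]
  have e1 : ((C:ℤ)-A) ≤ n := by omega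
  have e2 : ((D:ℤ)-B) ≤ n := by omega
  have e3 : (0:ℤ) ≤ (C:ℤ)-A := by omega
  have e4 : (0:ℤ) ≤ (D:ℤ)-B := by omega
  have key : ((B:ℤ)-A) + ((D:ℤ)-C) + 2 ≤ ((C:ℤ)-A) + ((D:ℤ)-B) := by omega
  nlinarith [sq_nonneg ((B:ℤ)-A), sq_nonneg ((D:ℤ)-C), mul_le_mul e1 e1 e3 (by positivity : (0:ℤ) ≤ (n:ℤ)), mul_le_mul e2 e2 e4 (by positivity : (0:ℤ) ≤ (n:ℤ))]

/-! ### generic finite sum lemmas -/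

lemma sum_four {M : Type*} [AddCommMonoid M] {n : ℕ} {a b c d : Fin n}
    (hab : a ≠ b) (hac : a ≠ c) (had : a ≠ d) (hbc : b ≠ c) (hbd : b ≠ d) (hcd : c ≠ d)
    (F : Fin n → M) :
    ∑ i ∈ ({a, b, c, d} : Finset (Fin n)), F i = F a + (F b + (F c + F d)) := by
  rw [Finset.sum_insert (by simp [hab, hac, had]), Finset.sum_insert (by simp [hbc, hbd]),
    Finset.sum_insert (by simp [hcd]), Finset.sum_singleton]

lemma sum_le_off {n : ℕ} (f g : Fin n → ℝ) (S : Finset (Fin n))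
    (hoff : ∀ i ∉ S, f i = g i) (hS : ∑ i ∈ S, f i ≤ ∑ i ∈ S, g i) :
    ∑ i, f i ≤ ∑ i, g i := by
  rw [← Finset.sum_add_sum_compl S f, ← Finset.sum_add_sum_compl S g]
  have : ∑ i ∈ Sᶜ, f i = ∑ i ∈ Sᶜ, g i :=
    Finset.sum_congr rfl fun i hi => hoff i (Finset.mem_compl.mp hi)
  linarith

lemma sum_lt_off {n : ℕ} (f g : Fin n → ℕ) (S : Finset (Fin n))
    (hoff : ∀ i ∉ S, f i = g i) (hS : ∑ i ∈ S, f i < ∑ i ∈ S, g i) :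
    ∑ i, f i < ∑ i, g i := by
  rw [← Finset.sum_add_sum_compl S f, ← Finset.sum_add_sum_compl S g]
  have : ∑ i ∈ Sᶜ, f i = ∑ i ∈ Sᶜ, g i :=
    Finset.sum_congr rfl fun i hi => hoff i (Finset.mem_compl.mp hi)
  omega

/-- conjugating the involution and re-summing -/
lemma conj_sum_eq {M : Type*} [AddCommMonoid M] {n : ℕ} (π : Equiv.Perm (Fin n))
    (u v : Fin n) (G : Fin n → Fin n → M) :
    ∑ i, G i (((Equiv.swap u v) * π * (Equiv.swap u v)) i)
      = ∑ i, G ((Equiv.swap u v) i) ((Equiv.swap u v) (π i)) := by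
  rw [← Equiv.sum_comp (Equiv.swap u v)
    (fun i => G i (((Equiv.swap u v) * π * (Equiv.swap u v)) i))]
  apply Finset.sum_congr rfl
  intro i _
  simp [Equiv.Perm.mul_apply, Equiv.swap_apply_self]


lemma conj_invol {n : ℕ} (pe : Equiv.Perm (Fin n)) (hinv : ∀ i, pe (pe i) = i) (u v : Fin n) :
    ∀ i, ((Equiv.swap u v) * pe * (Equiv.swap u v)) (((Equiv.swap u v) * pe * (Equiv.swap u v)) i) = i := by
  intro i
  simp [Equiv.Perm.mul_apply, Equiv.swap_apply_self, hinv]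

lemma conj_free {n : ℕ} (pe : Equiv.Perm (Fin n)) (hfree : ∀ i, pe i ≠ i) (u v : Fin n) :
    ∀ i, ((Equiv.swap u v) * pe * (Equiv.swap u v)) i ≠ i := by
  intro i h
  simp only [Equiv.Perm.mul_apply] at h
  have h2 := congrArg (Equiv.swap u v) h
  rw [Equiv.swap_apply_self] at h2
  exact hfree _ h2

/-- combinatorial bookkeeping for the nested exchange -/
lemma conj_sum_nested {M : Type*} [AddCommMonoid M] {n : ℕ} (pe : Equiv.Perm (Fin n))
    (hinv : ∀ i, pe (pe i) = i) {a b c d : Fin n}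
    (hab : a < b) (hbc : b < c) (hcd : c < d) (hpa : pe a = d) (hpb : pe b = c)
    (G : Fin n → Fin n → M) (hG : ∀ i j, G i j = G j i) :
    ∑ i, G i (((Equiv.swap c d) * pe * (Equiv.swap c d)) i) + (G a d + G a d + (G b c + G b c))
      = ∑ i, G i (pe i) + (G a c + G a c + (G b d + G b d)) := by
  have hpc : pe c = b := by rw [← hpb, hinv]
  have hpd : pe d = a := by rw [← hpa, hinv]
  have hab' : a ≠ b := ne_of_lt hab
  have hac' : a ≠ c := ne_of_lt (hab.trans hbc)
  have had' : a ≠ d := ne_of_lt ((hab.trans hbc).trans hcd)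
  have hbc' : b ≠ c := ne_of_lt hbc
  have hbd' : b ≠ d := ne_of_lt (hbc.trans hcd)
  have hcd' : c ≠ d := ne_of_lt hcd
  set S : Finset (Fin n) := {a, b, c, d} with hS
  have hmem : ∀ i : Fin n, i ∈ S ↔ (i = a ∨ i = b ∨ i = c ∨ i = d) := by
    intro i; simp [hS]
  rw [conj_sum_eq]
  rw [← Finset.sum_add_sum_compl S (fun i => G ((Equiv.swap c d) i) ((Equiv.swap c d) (pe i))),
      ← Finset.sum_add_sum_compl S (fun i => G i (pe i))]
  have hcompl : ∑ i ∈ Sᶜ, G ((Equiv.swap c d) i) ((Equiv.swap c d) (pe i))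
      = ∑ i ∈ Sᶜ, G i (pe i) := by
    apply Finset.sum_congr rfl
    intro i hi
    rw [Finset.mem_compl, hmem] at hi
    push_neg at hi
    obtain ⟨h1, h2, h3, h4⟩ := hi
    have g3 : pe i ≠ c := fun h => h2 (by rw [← hinv i, h, hpc])
    have g4 : pe i ≠ d := fun h => h1 (by rw [← hinv i, h, hpd])
    rw [Equiv.swap_apply_of_ne_of_ne h3 h4, Equiv.swap_apply_of_ne_of_ne g3 g4]
  rw [hcompl]
  have hnew : ∑ i ∈ S, G ((Equiv.swap c d) i) ((Equiv.swap c d) (pe i))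
      = G a c + (G b d + (G d b + G c a)) := by
    rw [hS, sum_four hab' hac' had' hbc' hbd' hcd']
    rw [hpa, hpb, hpc, hpd]
    rw [Equiv.swap_apply_of_ne_of_ne hac' had', Equiv.swap_apply_right,
        Equiv.swap_apply_of_ne_of_ne hbc' hbd', Equiv.swap_apply_left]
  have hold : ∑ i ∈ S, G i (pe i) = G a d + (G b c + (G c b + G d a)) := by
    rw [hS, sum_four hab' hac' had' hbc' hbd' hcd']
    rw [hpa, hpb, hpc, hpd]
  rw [hnew, hold, hG d b, hG c a, hG c b, hG d a]
  abel

/-- combinatorial bookkeeping for the disjoint exchange -/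
lemma conj_sum_disjoint {M : Type*} [AddCommMonoid M] {n : ℕ} (pe : Equiv.Perm (Fin n))
    (hinv : ∀ i, pe (pe i) = i) {a b c d : Fin n}
    (hab : a < b) (hbc : b < c) (hcd : c < d) (hpa : pe a = b) (hpc : pe c = d)
    (G : Fin n → Fin n → M) (hG : ∀ i j, G i j = G j i) :
    ∑ i, G i (((Equiv.swap b c) * pe * (Equiv.swap b c)) i) + (G a b + G a b + (G c d + G c d))
      = ∑ i, G i (pe i) + (G a c + G a c + (G b d + G b d)) := by
  have hpb : pe b = a := by rw [← hpa, hinv]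
  have hpd : pe d = c := by rw [← hpc, hinv]
  have hab' : a ≠ b := ne_of_lt hab
  have hac' : a ≠ c := ne_of_lt (hab.trans hbc)
  have had' : a ≠ d := ne_of_lt ((hab.trans hbc).trans hcd)
  have hbc' : b ≠ c := ne_of_lt hbc
  have hbd' : b ≠ d := ne_of_lt (hbc.trans hcd)
  have hcd' : c ≠ d := ne_of_lt hcd
  set S : Finset (Fin n) := {a, b, c, d} with hS
  have hmem : ∀ i : Fin n, i ∈ S ↔ (i = a ∨ i = b ∨ i = c ∨ i = d) := by
    intro i; simp [hS]
  rw [conj_sum_eq]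
  rw [← Finset.sum_add_sum_compl S (fun i => G ((Equiv.swap b c) i) ((Equiv.swap b c) (pe i))),
      ← Finset.sum_add_sum_compl S (fun i => G i (pe i))]
  have hcompl : ∑ i ∈ Sᶜ, G ((Equiv.swap b c) i) ((Equiv.swap b c) (pe i))
      = ∑ i ∈ Sᶜ, G i (pe i) := by
    apply Finset.sum_congr rfl
    intro i hi
    rw [Finset.mem_compl, hmem] at hi
    push_neg at hi
    obtain ⟨h1, h2, h3, h4⟩ := hi
    have g3 : pe i ≠ b := fun h => h1 (by rw [← hinv i, h, hpb])
    have g4 : pe i ≠ c := fun h => h4 (by rw [← hinv i, h, hpc])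
    rw [Equiv.swap_apply_of_ne_of_ne h2 h3, Equiv.swap_apply_of_ne_of_ne g3 g4]
  rw [hcompl]
  have hnew : ∑ i ∈ S, G ((Equiv.swap b c) i) ((Equiv.swap b c) (pe i))
      = G a c + (G c a + (G b d + G d b)) := by
    rw [hS, sum_four hab' hac' had' hbc' hbd' hcd']
    rw [hpa, hpb, hpc, hpd]
    rw [Equiv.swap_apply_of_ne_of_ne hab' hac', Equiv.swap_apply_left,
        Equiv.swap_apply_right,
        Equiv.swap_apply_of_ne_of_ne (Ne.symm hbd') (Ne.symm hcd')]
  have hold : ∑ i ∈ S, G i (pe i) = G a b + (G b a + (G c d + G d c)) := by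
    rw [hS, sum_four hab' hac' had' hbc' hbd' hcd']
    rw [hpa, hpb, hpc, hpd]
  rw [hnew, hold, hG c a, hG d b, hG b a, hG d c]
  abel


/-- a "bad" (non-crossing) configuration -/
def Bad {n : ℕ} (pe : Equiv.Perm (Fin n)) : Prop :=
  ∃ a b c d : Fin n, a < b ∧ b < c ∧ c < d ∧
    ((pe a = d ∧ pe b = c) ∨ (pe a = b ∧ pe c = d))

lemma not_bad_dist {N : ℕ} (pe : Equiv.Perm (Fin (2*N)))
    (hinv : ∀ i, pe (pe i) = i) (hfree : ∀ i, pe i ≠ i) (hnb : ¬ Bad pe) :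
    ∀ a : Fin (2*N), a < pe a → (pe a).1 = a.1 + N := by
  intro a hab
  set b := pe a with hb
  have hpb : pe b = a := by rw [hb, hinv]
  -- T = points strictly between a and b, U = points strictly outside [a,b]
  set T : Finset (Fin (2*N)) := Finset.Ioo a b with hT
  set U : Finset (Fin (2*N)) := Finset.Iio a ∪ Finset.Ioi b with hU
  have hUmem : ∀ i, i ∈ U ↔ (i < a ∨ b < i) := by
    intro i; simp [hU]
  have hTmem : ∀ i, i ∈ T ↔ (a < i ∧ i < b) := by
    intro i; simp [hT]
  have hTU : ∀ i ∈ T, pe i ∈ U := by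
    intro i hi
    rw [hTmem] at hi
    obtain ⟨h1, h2⟩ := hi
    have hia : i ≠ a := ne_of_gt h1
    have hib : i ≠ b := ne_of_lt h2
    have hpia : pe i ≠ a := fun h => hib (by rw [← hinv i, h, ← hb])
    have hpib : pe i ≠ b := fun h => hia (by rw [← hinv i, h, hpb])
    rw [hUmem]
    by_contra hcon
    push_neg at hcon
    obtain ⟨g1, g2⟩ := hcon
    have g1' : a < pe i := lt_of_le_of_ne g1 (Ne.symm hpia)
    have g2' : pe i < b := lt_of_le_of_ne g2 hpib
    rcases lt_trichotomy i (pe i) with h | h | h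
    · exact hnb ⟨a, i, pe i, b, h1, h, g2', Or.inl ⟨hb.symm, rfl⟩⟩
    · exact hfree i h.symm
    · exact hnb ⟨a, pe i, i, b, g1', h, h2, Or.inl ⟨hb.symm, hinv i⟩⟩
  have hUT : ∀ i ∈ U, pe i ∈ T := by
    intro i hi
    rw [hUmem] at hi
    have hia : i ≠ a := by rcases hi with h | h; exact ne_of_lt h; exact fun e => absurd (e ▸ h) (by simp [not_lt.mpr hab.le])
    have hib : i ≠ b := by rcases hi with h | h; exact fun e => absurd (e ▸ h) (by simp [not_lt.mpr hab.le]); exact ne_of_gt h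
    have hpia : pe i ≠ a := fun h => hib (by rw [← hinv i, h, ← hb])
    have hpib : pe i ≠ b := fun h => hia (by rw [← hinv i, h, hpb])
    rw [hTmem]
    by_contra hcon
    have hout : pe i < a ∨ b < pe i := by
      rcases lt_trichotomy (pe i) a with h | h | h
      · exact Or.inl h
      · exact absurd h hpia
      · rcases lt_trichotomy (pe i) b with h' | h' | h'
        · exact absurd ⟨h, h'⟩ hcon
        · exact absurd h' hpib
        · exact Or.inr h'
    -- four cases
    rcases hi with h | h <;> rcases hout with h' | h'
    · -- i < a, pe i < a : disjoint pattern left of (a,b)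
      rcases lt_trichotomy i (pe i) with hh | hh | hh
      · exact hnb ⟨i, pe i, a, b, hh, h', hab, Or.inr ⟨rfl, hb.symm⟩⟩
      · exact hfree i hh.symm
      · exact hnb ⟨pe i, i, a, b, hh, h, hab, Or.inr ⟨hinv i, hb.symm⟩⟩
    · -- i < a, b < pe i : (a,b) nested inside (i, pe i)
      exact hnb ⟨i, a, b, pe i, h, hab, h', Or.inl ⟨rfl, hb.symm⟩⟩
    · -- b < i, pe i < a : nested, outer (pe i, i)
      exact hnb ⟨pe i, a, b, i, h', hab, h, Or.inl ⟨hinv i, hb.symm⟩⟩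
    · -- b < i, b < pe i : disjoint right of (a,b)
      rcases lt_trichotomy i (pe i) with hh | hh | hh
      · exact hnb ⟨a, b, i, pe i, hab, h, hh, Or.inr ⟨hb.symm, rfl⟩⟩
      · exact hfree i hh.symm
      · exact hnb ⟨a, b, pe i, i, hab, h', hh, Or.inr ⟨hb.symm, hinv i⟩⟩
  have hinj : Set.InjOn pe ↑T := fun u _ v _ h => pe.injective h
  have hinj' : Set.InjOn pe ↑U := fun u _ v _ h => pe.injective h
  have hle1 : T.card ≤ U.card := Finset.card_le_card_of_injOn pe hTU hinj
  have hle2 : U.card ≤ T.card := Finset.card_le_card_of_injOn pe hUT hinj'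
  have hcardT : T.card = b.1 - a.1 - 1 := Fin.card_Ioo a b
  have hcardU : U.card = a.1 + (2*N - 1 - b.1) := by
    have hdisj : Disjoint (Finset.Iio a) (Finset.Ioi b) := by
      rw [Finset.disjoint_left]
      intro i hi1 hi2
      rw [Finset.mem_Iio] at hi1
      rw [Finset.mem_Ioi] at hi2
      exact absurd (hi2.trans hi1) (not_lt.mpr hab.le)
    rw [hU, Finset.card_union_of_disjoint hdisj, Fin.card_Iio, Fin.card_Ioi]
  have hval : a.1 < b.1 := hab
  have hlt : b.1 < 2*N := b.isLt
  omega


lemma sum_split {N : ℕ} (g : Fin (2*N) → ℝ) :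
    ∑ i, g i = (∑ i : Fin N, g ⟨i.1, Nat.lt_of_lt_of_le i.2 (by omega)⟩) + ∑ i : Fin N, g ⟨i.1 + N, (Nat.add_lt_add_right i.2 N).trans_le (by omega)⟩ := by
  rw [← Equiv.sum_comp ((finSumFinEquiv).trans (finCongr (show N + N = 2*N by omega))) g,
    Fintype.sum_sum_type]
  congr 1
  all_goals
    apply Finset.sum_congr rfl
    intro i _
    congr 1
    apply Fin.ext
    simp
    try omega


/-- per-index measure contribution -/
def Gm {n : ℕ} (i j : Fin n) : ℕ := (4*n^2+1) * (n - pd i.1 j.1) + (pd i.1 j.1)^2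

/-- termination measure -/
def meas {n : ℕ} (pe : Equiv.Perm (Fin n)) : ℕ := ∑ i, Gm i (pe i)

lemma Gm_symm {n : ℕ} (i j : Fin n) : Gm i j = Gm j i := by
  unfold Gm; rw [pd_comm]

lemma main_ind {N : ℕ} (p : ℝ) (hp : p < 0) (x : Fin (2*N) → ℝ) (hx : StrictMono x) :
    ∀ (m : ℕ) (pe : Equiv.Perm (Fin (2*N))), (∀ i, pe (pe i) = i) → (∀ i, pe i ≠ i) →
      meas pe ≤ m →
      2 * (∑ i : Fin N, (x ⟨i.1 + N, (Nat.add_lt_add_right i.2 N).trans_le (by omega)⟩ - x ⟨i.1, Nat.lt_of_lt_of_le i.2 (by omega)⟩) ^ p)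
        ≤ ∑ i, |x i - x (pe i)| ^ p := by
  intro m
  induction m using Nat.strong_induction_on with
  | _ m IH =>
  intro pe hinv hfree hm
  have habs : ∀ i j : Fin (2*N), i < j → |x i - x j| = x j - x i := by
    intro i j hij
    rw [abs_sub_comm]
    exact abs_of_pos (sub_pos.mpr (hx hij))
  by_cases hbad : Bad pe
  · obtain ⟨a, b, c, d, hab, hbc, hcd, hcase⟩ := hbad
    have hvab : a.1 < b.1 := hab
    have hvbc : b.1 < c.1 := hbc
    have hvcd : c.1 < d.1 := hcd
    have hvd : d.1 < 2*N := d.isLt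
    set G : Fin (2*N) → Fin (2*N) → ℝ := fun i j => |x i - x j| ^ p with hGdef
    have hGsym : ∀ i j, G i j = G j i := by
      intro i j; simp only [hGdef, abs_sub_comm]
    have eG : ∀ i j : Fin (2*N), i < j → G i j = (x j - x i) ^ p := by
      intro i j hij; simp only [hGdef]; rw [habs i j hij]
    rcases hcase with ⟨hpa, hpb⟩ | ⟨hpa, hpc⟩
    · -- nested pairs (a,d),(b,c) → (a,c),(b,d)
      have hinv' := conj_invol pe hinv c d
      have hfree' := conj_free pe hfree c d
      have hsumG := conj_sum_nested pe hinv hab hbc hcd hpa hpb G hGsym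
      have hsumGm := conj_sum_nested pe hinv hab hbc hcd hpa hpb Gm Gm_symm
      have hkey := key_nested hp (hx hab) (hx hbc) (hx hcd)
      have hmeaskey : Gm a c + Gm a c + (Gm b d + Gm b d)
          < Gm a d + Gm a d + (Gm b c + Gm b c) := by
        unfold Gm
        rw [pd_of_le (by omega : a.1 ≤ c.1), pd_of_le (by omega : b.1 ≤ d.1),
          pd_of_le (by omega : a.1 ≤ d.1), pd_of_le (by omega : b.1 ≤ c.1)]
        have := meas_nested (K := 4*(2*N)^2+1) hvab hvbc hvcd hvd
        linarith
      have hmlt : meas ((Equiv.swap c d) * pe * (Equiv.swap c d)) < meas pe := by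
        have h1 : meas ((Equiv.swap c d) * pe * (Equiv.swap c d))
            + (Gm a d + Gm a d + (Gm b c + Gm b c))
            = meas pe + (Gm a c + Gm a c + (Gm b d + Gm b d)) := hsumGm
        omega
      have hIH := IH (meas ((Equiv.swap c d) * pe * (Equiv.swap c d)))
        (lt_of_lt_of_le hmlt hm) _ hinv' hfree' le_rfl
      have hcost : ∑ i, |x i - x (((Equiv.swap c d) * pe * (Equiv.swap c d)) i)| ^ p
          ≤ ∑ i, |x i - x (pe i)| ^ p := by
        have h1 : ∑ i, G i (((Equiv.swap c d) * pe * (Equiv.swap c d)) i)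
            + (G a d + G a d + (G b c + G b c))
            = ∑ i, G i (pe i) + (G a c + G a c + (G b d + G b d)) := hsumG
        rw [eG a c (hab.trans hbc), eG b d (hbc.trans hcd)] at h1
        rw [eG a d ((hab.trans hbc).trans hcd), eG b c hbc] at h1
        simp only [hGdef] at h1 ⊢
        linarith
      exact le_trans hIH hcost
    · -- disjoint pairs (a,b),(c,d) → (a,c),(b,d)
      have hinv' := conj_invol pe hinv b c
      have hfree' := conj_free pe hfree b c
      have hsumG := conj_sum_disjoint pe hinv hab hbc hcd hpa hpc G hGsym
      have hsumGm := conj_sum_disjoint pe hinv hab hbc hcd hpa hpc Gm Gm_symm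
      have hkey := key_disjoint hp (hx hab) (hx hbc) (hx hcd)
      have hmeaskey : Gm a c + Gm a c + (Gm b d + Gm b d)
          < Gm a b + Gm a b + (Gm c d + Gm c d) := by
        unfold Gm
        rw [pd_of_le (by omega : a.1 ≤ c.1), pd_of_le (by omega : b.1 ≤ d.1),
          pd_of_le (by omega : a.1 ≤ b.1), pd_of_le (by omega : c.1 ≤ d.1)]
        have := meas_disjoint (K := 4*(2*N)^2+1) rfl hvab hvbc hvcd hvd
        linarith
      have hmlt : meas ((Equiv.swap b c) * pe * (Equiv.swap b c)) < meas pe := by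
        have h1 : meas ((Equiv.swap b c) * pe * (Equiv.swap b c))
            + (Gm a b + Gm a b + (Gm c d + Gm c d))
            = meas pe + (Gm a c + Gm a c + (Gm b d + Gm b d)) := hsumGm
        omega
      have hIH := IH (meas ((Equiv.swap b c) * pe * (Equiv.swap b c)))
        (lt_of_lt_of_le hmlt hm) _ hinv' hfree' le_rfl
      have hcost : ∑ i, |x i - x (((Equiv.swap b c) * pe * (Equiv.swap b c)) i)| ^ p
          ≤ ∑ i, |x i - x (pe i)| ^ p := by
        have h1 : ∑ i, G i (((Equiv.swap b c) * pe * (Equiv.swap b c)) i)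
            + (G a b + G a b + (G c d + G c d))
            = ∑ i, G i (pe i) + (G a c + G a c + (G b d + G b d)) := hsumG
        rw [eG a c (hab.trans hbc), eG b d (hbc.trans hcd)] at h1
        rw [eG a b hab, eG c d hcd] at h1
        simp only [hGdef] at h1 ⊢
        linarith
      exact le_trans hIH hcost
  · -- terminal: pe is the maximally crossing matching
    have hdist := not_bad_dist pe hinv hfree hbad
    have hN : ∀ i : Fin (2*N), (pe i).1 = if i.1 < N then i.1 + N else i.1 - N := by
      intro i
      rcases lt_trichotomy i (pe i) with h | h | h
      · have h1 := hdist i h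
        have h2 := (pe i).isLt
        have h3 : i.1 < N := by omega
        simp [h3, h1]
      · exact absurd h.symm (hfree i)
      · have h1 := hdist (pe i) (by rw [hinv]; exact h)
        rw [hinv] at h1
        have h3 : ¬ (pe i).1 + N < N := by omega
        have h4 : ¬ i.1 < N := by omega
        simp [h4]
        omega
    rw [sum_split (fun i => |x i - x (pe i)| ^ p)]
    have e1 : ∀ i : Fin N,
        |x ⟨i.1, by omega⟩ - x (pe ⟨i.1, by omega⟩)| ^ p
          = (x ⟨i.1 + N, by omega⟩ - x ⟨i.1, by omega⟩) ^ p := by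
      intro i
      have hv : pe ⟨i.1, by omega⟩ = ⟨i.1 + N, by omega⟩ := by
        apply Fin.ext
        rw [hN ⟨i.1, by omega⟩]
        simp [i.2]
      rw [hv, habs ⟨i.1, by omega⟩ ⟨i.1 + N, by omega⟩ (by have := i.2; simp [Fin.lt_def]; omega)]
    have e2 : ∀ i : Fin N,
        |x ⟨i.1 + N, by omega⟩ - x (pe ⟨i.1 + N, by omega⟩)| ^ p
          = (x ⟨i.1 + N, by omega⟩ - x ⟨i.1, by omega⟩) ^ p := by
      intro i
      have hv : pe ⟨i.1 + N, by omega⟩ = ⟨i.1, by omega⟩ := by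
        apply Fin.ext
        rw [hN ⟨i.1 + N, by omega⟩]
        simp
      rw [hv, abs_of_pos]
      apply sub_pos.mpr
      apply hx
      have := i.2
      simp [Fin.lt_def]
      omega
    rw [Finset.sum_congr rfl (fun i _ => e1 i), Finset.sum_congr rfl (fun i _ => e2 i)]
    linarith [le_refl (∑ i : Fin N, (x ⟨i.1 + N, by omega⟩ - x ⟨i.1, by omega⟩) ^ p)]


/-- For `p < 0` and `2N` increasingly ordered distinct points on `[0,1]`, the
maximally crossing matching pairing `xᵢ` with `x_{i+N}` is optimal: a perfect
matching is encoded as a fixed-point-free involution `π`, each pair being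
counted twice in the sum. -/
theorem matching_crossing_pairs_optimal {N : ℕ} (p : ℝ) (hp : p < 0)
    (x : Fin (2 * N) → ℝ) (hx : StrictMono x)
    (hx01 : ∀ i, x i ∈ Set.Icc (0:ℝ) 1)
    (π : Equiv.Perm (Fin (2 * N)))
    (hinv : ∀ i, π (π i) = i) (hfree : ∀ i, π i ≠ i) :
    ∑ i : Fin N, (x ⟨i.1 + N, by omega⟩ - x ⟨i.1, by omega⟩) ^ p ≤
      (1 / 2) * ∑ i, |x i - x (π i)| ^ p := by
  have h := main_ind p hp x hx (meas π) π hinv hfree le_rfl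
  linarith
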